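/- arXiv:1103.5151 — 2 statements merged into one kernel-verified Lean document; each statement's English description precedes it below -/
import Mathlib

section
/- Let F be free on a totally ordered set X, and let c₁ ≥ c₂ ≥ 1 and n ≥ 1 satisfy n − 1 ≤ 2c₂ − c₁. If β and α are basic commutators on X with β > α, c₁+1 ≤ wt(β) ≤ c₁+n, and c₂+1 ≤ wt(α) ≤ c₂+n, then [β,α] is a basic commutator on X. -/
/-- Formal commutators (bracket words) on a set `X` of generators. -/
inductive FormalComm (X : Type) : Type
  | of : X → FormalComm X
  | comm : FormalComm X → FormalComm X → FormalComm X

namespace FormalComm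

/-- The weight of a formal commutator. -/
def weight {X : Type} : FormalComm X → ℕ
  | of _ => 1
  | comm b a => weight b + weight a

/-- Basic commutators with respect to a strict order `r` on formal commutators:
generators are basic of weight 1; `[b,a]` is basic if `b`, `a` are basic, `a < b`,
and whenever `b = [b₁,b₂]` one has `b₂ ≤ a`. -/
inductive IsBasic {X : Type} (r : FormalComm X → FormalComm X → Prop) : FormalComm X → Prop
  | of (x : X) : IsBasic r (.of x)
  | comm (b a : FormalComm X) : IsBasic r b → IsBasic r a → r a b →
      (∀ b₁ b₂, b = .comm b₁ b₂ → ¬ r a b₂) → IsBasic r (.comm b a)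

open scoped commutatorElement in
/-- Evaluation of a formal commutator in the free group on `X`. -/
def eval {X : Type} : FormalComm X → FreeGroup X
  | of x => FreeGroup.of x
  | comm b a => ⁅eval b, eval a⁆

end FormalComm

/-- The Witt number `χ_n(d) = (1/n) ∑_{m ∣ n} μ(m) d^{n/m}`. -/
def witt (n d : ℕ) : ℕ :=
  ((∑ m ∈ n.divisors, ArithmeticFunction.moebius m * (d : ℤ) ^ (n / m)) / (n : ℤ)).toNat


/-- Lemma 2.1: if `n - 1 ≤ 2c₂ - c₁` (stated as `n + c₁ ≤ 2c₂ + 1`), `c₁ ≥ c₂ ≥ 1`, and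
`β > α` are basic commutators with `c₁+1 ≤ wt(β) ≤ c₁+n` and `c₂+1 ≤ wt(α) ≤ c₂+n`,
then `[β,α]` is a basic commutator. -/
theorem comm_isBasic_of_weights {X : Type}
    (r : FormalComm X → FormalComm X → Prop)
    (hr : IsStrictTotalOrder (FormalComm X) r)
    (hwt : ∀ a b : FormalComm X, a.weight < b.weight → r a b)
    (c₁ c₂ n : ℕ) (hc : c₂ ≤ c₁) (hc₂ : 1 ≤ c₂) (hn : 1 ≤ n)
    (hineq : n + c₁ ≤ 2 * c₂ + 1)
    (β α : FormalComm X) (hβ : FormalComm.IsBasic r β) (hα : FormalComm.IsBasic r α)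
    (hab : r α β)
    (hβlo : c₁ + 1 ≤ β.weight) (hβhi : β.weight ≤ c₁ + n)
    (hαlo : c₂ + 1 ≤ α.weight) (hαhi : α.weight ≤ c₂ + n) :
    FormalComm.IsBasic r (.comm β α) := by
  haveI := hr
  have hasymm : ∀ a b : FormalComm X, r a b → ¬ r b a := fun a b h1 h2 =>
    irrefl_of r a (trans_of r h1 h2)
  refine .comm β α hβ hα hab ?_
  rintro b₁ b₂ rfl hrab
  -- from basicness of β = comm b₁ b₂ we get r b₂ b₁
  have h21 : r b₂ b₁ := by cases hβ with | comm _ _ _ _ h _ => exact h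
  -- hence weight b₂ ≤ weight b₁
  have hw : b₂.weight ≤ b₁.weight := by
    by_contra h
    exact hasymm _ _ (hwt b₁ b₂ (by omega)) h21
  have hwβ : (FormalComm.comm b₁ b₂).weight = b₁.weight + b₂.weight := rfl
  -- so 2 * weight b₂ ≤ weight β ≤ c₁ + n ≤ 2c₂ + 1, giving weight b₂ ≤ c₂ < weight α
  have h2 : b₂.weight < α.weight := by
    have := hβhi; rw [hwβ] at this; omega
  exact hasymm _ _ (hwt b₂ α h2) hrab
end

section
/- If c₁ ≥ c₂ and c₂+n < c₁+1, then |A − C| = (Σ_{i=c₁+1}^{c₁+n} χ_i(m)) · (Σ_{i=c₂+1}^{c₂+n} χ_i(m)); and if c₂+n ≥ c₁+1, then |A − C| = (Σ_{i=c₁+1}^{c₁+n} χ_i(m))·(Σ_{i=c₂+1}^{c₁} χ_i(m)) + χ₂(Σ_{i=c₁+1}^{c₂+n} χ_i(m)). -/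
namespace HallWitt

open FormalComm List

variable {m : ℕ} (r : FormalComm (Fin m) → FormalComm (Fin m) → Prop)

local notation "T" => FormalComm (Fin m)

variable (hr : IsStrictTotalOrder (FormalComm (Fin m)) r)
variable (hwt : ∀ a b : FormalComm (Fin m), a.weight < b.weight → r a b)

section OrderFacts
include hr

lemma ltt {a b c : T} (h1 : r a b) (h2 : r b c) : r a c := hr.trans a b c h1 h2

lemma lirr (a : T) : ¬ r a a := hr.irrefl a

lemma ltri (a b : T) : r a b ∨ a = b ∨ r b a := by haveI := hr; exact trichotomous_of r a b

/-- from `r a b` and `b ≤ c` conclude `r a c` -/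
lemma lt_of_lt_of_le' {a b c : T} (h1 : r a b) (h2 : ¬ r c b) : r a c := by
  rcases ltri r hr b c with h | h | h
  · exact ltt r hr h1 h
  · subst h; exact h1
  · exact absurd h h2

lemma le_trans' {a b c : T} (h1 : ¬ r b a) (h2 : ¬ r c b) : ¬ r c a := by
  intro hca
  exact h2 (lt_of_lt_of_le' r hr hca h1)

lemma asymm' {a b : T} (h : r a b) : ¬ r b a := fun h' => lirr r hr a (ltt r hr h h')

end OrderFacts

lemma weight_pos (t : T) : 1 ≤ t.weight := by
  induction t with
  | of x => exact le_refl 1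
  | comm b a ihb iha => simp only [weight]; omega

section WtFacts
include hwt

lemma lt_comm_left (b a : T) : r b (FormalComm.comm b a) := by
  apply hwt; have := weight_pos a; simp only [weight]; omega

lemma lt_comm_right (b a : T) : r a (FormalComm.comm b a) := by
  apply hwt; have := weight_pos b; simp only [weight]; omega

end WtFacts

/-- The foliage of a formal commutator: the word of its leaves. -/
def fol : T → List (Fin m)
  | .of x => [x]
  | .comm b a => fol b ++ fol a

lemma length_fol (t : T) : (fol t).length = t.weight := by
  induction t with
  | of x => rfl
  | comm b a ihb iha => simp [fol, weight, ihb, iha]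

/-- One step of the collection process. -/
inductive Step : List T → List T → Prop
  | mk (p s : List T) (b a : T) (hab : r a b)
      (hsuf : ∀ c ∈ s, ¬ r c a)
      (hside : ∀ b₁ b₂, b = FormalComm.comm b₁ b₂ → ¬ r a b₂) :
      Step (p ++ b :: a :: s) (p ++ FormalComm.comm b a :: s)

lemma Step.cons {l l' : List T} (t : T) (h : Step r l l') : Step r (t :: l) (t :: l') := by
  cases h with
  | mk p s b a hab hsuf hside =>
      exact Step.mk (t :: p) s b a hab hsuf hside

/-- Reduction: reflexive-transitive closure of `Step`. -/
def Red : List T → List T → Prop := Relation.ReflTransGen (Step r)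

lemma Red.cons {l l' : List T} (t : T) (h : Red r l l') : Red r (t :: l) (t :: l') :=
  Relation.ReflTransGen.lift (fun x => t :: x) (fun _ _ hs => Step.cons r t hs) _ _ h

lemma Red.append_left {l l' : List T} (q : List T) (h : Red r l l') :
    Red r (q ++ l) (q ++ l') := by
  induction q with
  | nil => exact h
  | cons t q ih => exact Red.cons r t ih

def wordOf (l : List T) : List (Fin m) := (l.map fol).flatten

lemma wordOf_cons (t : T) (l : List T) : wordOf (t :: l) = fol t ++ wordOf l := by
  simp [wordOf]

lemma Step.wordOf_eq {l l' : List T} (h : Step r l l') : wordOf l' = wordOf l := by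
  cases h with
  | mk p s b a hab hsuf hside => simp [wordOf, fol]

lemma Red.wordOf_eq {l l' : List T} (h : Red r l l') : wordOf l' = wordOf l := by
  induction h with
  | refl => rfl
  | tail _ hs ih => rw [Step.wordOf_eq r hs, ih]

lemma Step.length {l l' : List T} (h : Step r l l') : l'.length + 1 = l.length := by
  cases h with
  | mk p s b a hab hsuf hside => simp; omega

lemma Step.basic {l l' : List T} (hl : ∀ t ∈ l, IsBasic r t) (h : Step r l l') :
    ∀ t ∈ l', IsBasic r t := by
  cases h with
  | mk p s b a hab hsuf hside =>
      intro t ht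
      simp only [List.mem_append, List.mem_cons] at ht hl
      rcases ht with h1 | h2 | h3
      · exact hl t (Or.inl h1)
      · subst h2
        exact IsBasic.comm b a (hl b (by tauto)) (hl a (by tauto)) hab hside
      · exact hl t (by tauto)


/-- Invariant: the right child of every composite entry is `≤` all later entries. -/
def Inv : List T → Prop
  | [] => True
  | t :: l => (∀ b₁ b₂, t = FormalComm.comm b₁ b₂ → ∀ c ∈ l, ¬ r c b₂) ∧ Inv l

lemma inv_letters (w : List (Fin m)) : Inv r (w.map FormalComm.of) := by
  induction w with
  | nil => trivial
  | cons x w ih => exact ⟨fun b₁ b₂ h => by simp at h, ih⟩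

section Core
include hr hwt

lemma inv_step_aux (p : List T) {s : List T} {b a : T} (hab : r a b)
    (hsuf : ∀ c ∈ s, ¬ r c a)
    (hinv : Inv r (p ++ b :: a :: s)) : Inv r (p ++ FormalComm.comm b a :: s) := by
  induction p with
  | nil =>
      obtain ⟨hb, ha, hs⟩ := hinv
      refine ⟨fun b₁ b₂ h c hc => ?_, hs⟩
      injection h with h1 h2
      subst h2
      exact hsuf c hc
  | cons x p ih =>
      obtain ⟨hx, hrest⟩ := hinv
      refine ⟨fun x₁ x₂ hxeq c hc => ?_, ih hrest⟩
      rcases List.mem_append.mp hc with h1 | h23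
      case _ =>
        exact hx x₁ x₂ hxeq c (by simp [h1])
      rcases List.mem_cons.mp h23 with h2 | h3
      · subst h2
        intro hcontra
        have hb : ¬ r b x₂ := hx x₁ x₂ hxeq b (by simp)
        exact hb (ltt r hr (lt_comm_left r hwt b a) hcontra)
      · exact hx x₁ x₂ hxeq c (by simp [h3])

lemma Step.inv {l l' : List T} (hinv : Inv r l) (h : Step r l l') : Inv r l' := by
  cases h with
  | mk p s b a hab hsuf hside => exact inv_step_aux r hr hwt p hab hsuf hinv

lemma Red.inv {l l' : List T} (hinv : Inv r l) (h : Red r l l') : Inv r l' := by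
  induction h with
  | refl => exact hinv
  | tail _ hs ih => exact Step.inv r hr hwt ih hs

end Core

lemma Red.basic {l l' : List T} (hl : ∀ t ∈ l, IsBasic r t) (h : Red r l l') :
    ∀ t ∈ l', IsBasic r t := by
  induction h with
  | refl => exact hl
  | tail _ hs ih => exact Step.basic r ih hs

section Core2
include hr

lemma progress (l : List T) (hinv : Inv r l)
    (hnf : ∀ l', ¬ Step r l l') : l.Pairwise (fun a b => ¬ r b a) := by
  induction l with
  | nil => exact List.Pairwise.nil
  | cons t l ih =>
      have hnf' : ∀ l', ¬ Step r l l' := fun l' hstep => hnf (t :: l') (Step.cons r t hstep)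
      have hsl : l.Pairwise (fun a b => ¬ r b a) := ih hinv.2 hnf'
      rw [List.pairwise_cons]
      refine ⟨fun c hc hct => ?_, hsl⟩
      -- c ∈ l with r c t; derive a step, contradiction
      match l, hc with
      | a :: s, hc =>
        have hat : r a t := by
          by_contra hna
          rcases List.mem_cons.mp hc with hc' | hc'
          · exact hna (hc' ▸ hct)
          · have hca : ¬ r c a := (List.pairwise_cons.mp hsl).1 c hc'
            rcases ltri r hr t a with h | h | h
            · exact hca (ltt r hr hct h)
            · subst h; exact hca hct
            · exact hna h
        have hsuf : ∀ c ∈ s, ¬ r c a := (List.pairwise_cons.mp hsl).1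
        have hside : ∀ t₁ t₂, t = FormalComm.comm t₁ t₂ → ¬ r a t₂ :=
          fun t₁ t₂ ht => hinv.1 t₁ t₂ ht a (by simp)
        exact hnf ([] ++ FormalComm.comm t a :: s)
          (Step.mk [] s t a hat hsuf hside)

omit hr in
lemma sorted_nostep {l : List T} (hs : l.Pairwise (fun a b => ¬ r b a)) :
    ∀ l', ¬ Step r l l' := by
  intro l' h
  cases h with
  | mk p s b a hab hsuf hside =>
      have : ¬ r a b := by
        have := List.pairwise_append.mp hs
        have h2 := this.2.1
        rw [List.pairwise_cons] at h2
        exact h2.1 a (by simp)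
      exact this hab

end Core2

lemma exists_nf (l : List T) : ∃ l', Red r l l' ∧ ∀ u, ¬ Step r l' u := by
  generalize hn : l.length = n
  induction n using Nat.strong_induction_on generalizing l with
  | _ n ih =>
    by_cases h : ∃ u, Step r l u
    · obtain ⟨u, hu⟩ := h
      have hlen : u.length < n := by have := Step.length r hu; omega
      obtain ⟨w, hred, hnf⟩ := ih u.length hlen u rfl
      exact ⟨w, Relation.ReflTransGen.head hu hred, hnf⟩
    · exact ⟨l, Relation.ReflTransGen.refl, fun u hu => h ⟨u, hu⟩⟩

lemma step_elim {l l' : List T} (h : Step r l l') :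
    ∃ p s b a, r a b ∧ (∀ c ∈ s, ¬ r c a) ∧
      (∀ b₁ b₂, b = FormalComm.comm b₁ b₂ → ¬ r a b₂) ∧
      l = p ++ b :: a :: s ∧ l' = p ++ FormalComm.comm b a :: s := by
  cases h with
  | mk p s b a hab hsuf hside => exact ⟨p, s, b, a, hab, hsuf, hside, rfl, rfl⟩

section Diamond
include hr hwt

lemma diamond_aux {p₁ s₁ s₂ : List T} {b₁ a₁ b₂ a₂ : T} (q : List T)
    (hx : b₁ :: a₁ :: s₁ = q ++ b₂ :: a₂ :: s₂)
    (hab₁ : r a₁ b₁) (hsuf₁ : ∀ c ∈ s₁, ¬ r c a₁)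
    (hside₁ : ∀ x y, b₁ = FormalComm.comm x y → ¬ r a₁ y)
    (hab₂ : r a₂ b₂) (hsuf₂ : ∀ c ∈ s₂, ¬ r c a₂)
    (hside₂ : ∀ x y, b₂ = FormalComm.comm x y → ¬ r a₂ y) :
    (p₁ ++ FormalComm.comm b₁ a₁ :: s₁ = (p₁ ++ q) ++ FormalComm.comm b₂ a₂ :: s₂) ∨
    ∃ w, Step r (p₁ ++ FormalComm.comm b₁ a₁ :: s₁) w ∧
      Step r ((p₁ ++ q) ++ FormalComm.comm b₂ a₂ :: s₂) w := by
  match q, hx with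
  | [], hx =>
      left
      simp only [List.nil_append] at hx
      injection hx with h1 hx; injection hx with h2 h3
      subst h1; subst h2; subst h3; simp
  | [e], hx =>
      exfalso
      simp only [List.cons_append, List.nil_append] at hx
      injection hx with h1 hx; injection hx with h2 h3
      subst h3
      exact hsuf₁ a₂ (by simp) (h2 ▸ hab₂)
  | e :: f :: q', hx =>
      right
      simp only [List.cons_append] at hx
      injection hx with h1 hx; injection hx with h2 h3
      subst h1; subst h2
      refine ⟨p₁ ++ FormalComm.comm b₁ a₁ :: (q' ++ FormalComm.comm b₂ a₂ :: s₂), ?_, ?_⟩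
      · have := Step.mk (r := r) (p₁ ++ FormalComm.comm b₁ a₁ :: q') s₂ b₂ a₂ hab₂ hsuf₂ hside₂
        simpa [h3] using this
      · have hsuf' : ∀ c ∈ q' ++ FormalComm.comm b₂ a₂ :: s₂, ¬ r c a₁ := by
          intro c hc
          simp only [List.mem_append, List.mem_cons] at hc
          rcases hc with h | h | h
          · exact hsuf₁ c (by simp [h3, h])
          · subst h
            intro hcontra
            have hb2 : ¬ r b₂ a₁ := hsuf₁ b₂ (by simp [h3])
            exact hb2 (ltt r hr (lt_comm_left r hwt b₂ a₂) hcontra)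
          · exact hsuf₁ c (by simp [h3, h])
        have := Step.mk (r := r) p₁ (q' ++ FormalComm.comm b₂ a₂ :: s₂) b₁ a₁ hab₁ hsuf' hside₁
        simpa using this

lemma diamond {l u v : List T} (h1 : Step r l u) (h2 : Step r l v) :
    u = v ∨ ∃ w, Step r u w ∧ Step r v w := by
  obtain ⟨p₁, s₁, b₁, a₁, hab₁, hsuf₁, hside₁, hl₁, hu⟩ := step_elim r h1
  obtain ⟨p₂, s₂, b₂, a₂, hab₂, hsuf₂, hside₂, hl₂, hv⟩ := step_elim r h2
  subst hu; subst hv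
  rw [hl₁] at hl₂
  rcases List.append_eq_append_iff.mp hl₂ with ⟨q, hq1, hq2⟩ | ⟨q, hq1, hq2⟩
  · subst hq1
    rcases diamond_aux r hr hwt (p₁ := p₁) q hq2 hab₁ hsuf₁ hside₁ hab₂ hsuf₂ hside₂ with
      h | ⟨w, hw1, hw2⟩
    · exact Or.inl h
    · exact Or.inr ⟨w, hw1, hw2⟩
  · subst hq1
    rcases diamond_aux r hr hwt (p₁ := p₂) q hq2 hab₂ hsuf₂ hside₂ hab₁ hsuf₁ hside₁ with
      h | ⟨w, hw1, hw2⟩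
    · exact Or.inl h.symm
    · exact Or.inr ⟨w, hw2, hw1⟩

lemma nf_unique : ∀ (n : ℕ) (l u v : List T), l.length ≤ n → Red r l u → Red r l v →
    (∀ w, ¬ Step r u w) → (∀ w, ¬ Step r v w) → u = v := by
  intro n
  induction n with
  | zero =>
      intro l u v hlen hu hv hnfu hnfv
      rcases hu.cases_head with h | ⟨u₁, hs, _⟩
      · subst h
        rcases hv.cases_head with h' | ⟨v₁, hs', _⟩
        · exact h'.symm ▸ rfl
        · exact absurd hs' (hnfu v₁)
      · -- step from l, but l has length ≤ 0: a step needs length ≥ 2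
        obtain ⟨p, s, b, a, _, _, _, hl, _⟩ := step_elim r hs
        subst hl; simp at hlen
  | succ n ih =>
      intro l u v hlen hu hv hnfu hnfv
      rcases hu.cases_head with h | ⟨u₁, hsu, hru⟩
      · subst h
        rcases hv.cases_head with h' | ⟨v₁, hs', _⟩
        · exact h'.symm ▸ rfl
        · exact absurd hs' (hnfu v₁)
      · rcases hv.cases_head with h' | ⟨v₁, hsv, hrv⟩
        · exact absurd hsu (h' ▸ hnfv u₁)
        · have hlu : u₁.length ≤ n := by have := Step.length r hsu; omega
          have hlv : v₁.length ≤ n := by have := Step.length r hsv; omega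
          rcases diamond r hr hwt hsu hsv with heq | ⟨w, hw1, hw2⟩
          · subst heq
            exact ih u₁ u v hlu hru hrv hnfu hnfv
          · obtain ⟨w', hredw, hnfw⟩ := exists_nf r w
            have h1 : u = w' :=
              ih u₁ u w' hlu hru (Relation.ReflTransGen.head hw1 hredw) hnfu hnfw
            have h2 : v = w' :=
              ih v₁ v w' hlv hrv (Relation.ReflTransGen.head hw2 hredw) hnfv hnfw
            rw [h1, h2]

end Diamond


section Collect
include hr hwt

lemma collect {t : T} (ht : IsBasic r t) : ∀ (S : List T),
    (∀ b a, t = FormalComm.comm b a → ∀ c ∈ S, ¬ r c a) →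
    Red r ((fol t).map FormalComm.of ++ S) (t :: S) := by
  induction ht with
  | of x => intro S hS; exact Relation.ReflTransGen.refl
  | comm b a hb ha hab hside ihb iha =>
      intro S hS
      have hSa : ∀ c ∈ S, ¬ r c a := fun c hc => hS b a rfl c hc
      have step1 : Red r ((fol b).map FormalComm.of ++ ((fol a).map FormalComm.of ++ S))
          ((fol b).map FormalComm.of ++ (a :: S)) := by
        apply Red.append_left
        apply iha
        intro a₁ a₂ haeq c hc hcon
        apply hSa c hc
        exact ltt r hr hcon (haeq ▸ lt_comm_right r hwt a₁ a₂)
      have step2 : Red r ((fol b).map FormalComm.of ++ (a :: S)) (b :: a :: S) := by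
        apply ihb
        intro b₁ b₂ hbeq c hc
        rcases List.mem_cons.mp hc with h | h
        · exact h ▸ hside b₁ b₂ hbeq
        · intro hcon
          exact hSa c h (lt_of_lt_of_le' r hr hcon (hside b₁ b₂ hbeq))
      have step3 : Step r (b :: a :: S) (FormalComm.comm b a :: S) :=
        Step.mk [] S b a hab hSa hside
      have heq : (fol (FormalComm.comm b a)).map FormalComm.of ++ S =
          (fol b).map FormalComm.of ++ ((fol a).map FormalComm.of ++ S) := by
        simp [fol]
      rw [heq]
      exact (step1.trans step2).tail step3

lemma collect_sorted (l : List T) (hl : ∀ t ∈ l, IsBasic r t)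
    (hs : l.Pairwise (fun a b => ¬ r b a)) :
    Red r ((wordOf l).map FormalComm.of) l := by
  induction l with
  | nil => exact Relation.ReflTransGen.refl
  | cons t l ih =>
      rw [wordOf_cons, List.map_append]
      have h1 : Red r ((fol t).map FormalComm.of ++ (wordOf l).map FormalComm.of)
          ((fol t).map FormalComm.of ++ l) :=
        Red.append_left r _ (ih (fun u hu => hl u (by simp [hu])) (List.pairwise_cons.mp hs).2)
      refine h1.trans (collect r hr hwt (hl t (by simp)) l ?_)
      intro b a ht c hc hcon
      apply (List.pairwise_cons.mp hs).1 c hc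
      exact ltt r hr hcon (ht ▸ lt_comm_right r hwt b a)

end Collect

lemma wordOf_letters (w : List (Fin m)) : wordOf (w.map FormalComm.of) = w := by
  induction w with
  | nil => rfl
  | cons x w ih => simpa [wordOf, fol] using ih

lemma sum_weights_eq_length (l : List T) : (l.map weight).sum = (wordOf l).length := by
  induction l with
  | nil => rfl
  | cons t l ih => simp [wordOf_cons, length_fol, ih]

/-- Sorted lists of basic commutators with total weight `n`. -/
def SL (n : ℕ) : Set (List T) :=
  {l | l.Pairwise (fun a b => ¬ r b a) ∧ (∀ t ∈ l, IsBasic r t) ∧ (l.map weight).sum = n}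

/-- Multisets of basic commutators with total weight `n`. -/
def MS (n : ℕ) : Set (Multiset T) :=
  {A | (∀ t ∈ A, IsBasic r t) ∧ (A.map weight).sum = n}

section Bijection
include hr hwt

lemma phi_bijective (n : ℕ) :
    Function.Bijective (fun l : SL r n => (⟨wordOf l.1, by
      have := l.2.2.2; rw [sum_weights_eq_length] at this; exact this⟩ :
      {w : List (Fin m) // w.length = n})) := by
  constructor
  · rintro ⟨l₁, hs₁, hb₁, hw₁⟩ ⟨l₂, hs₂, hb₂, hw₂⟩ h
    simp only [Subtype.mk_eq_mk] at h ⊢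
    have r₁ : Red r ((wordOf l₁).map FormalComm.of) l₁ := collect_sorted r hr hwt l₁ hb₁ hs₁
    have r₂ : Red r ((wordOf l₁).map FormalComm.of) l₂ := by
      rw [h]; exact collect_sorted r hr hwt l₂ hb₂ hs₂
    exact Subtype.ext <| nf_unique r hr hwt ((wordOf l₁).map FormalComm.of).length _ _ _ le_rfl r₁ r₂
      (sorted_nostep r hs₁) (sorted_nostep r hs₂)
  · rintro ⟨w, hw⟩
    obtain ⟨l, hred, hnf⟩ := exists_nf r (w.map FormalComm.of)
    have hbasic : ∀ t ∈ l, IsBasic r t := by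
      apply Red.basic r _ hred
      intro t ht
      obtain ⟨x, _, rfl⟩ := List.mem_map.mp ht
      exact IsBasic.of x
    have hinv : Inv r l := Red.inv r hr hwt (inv_letters r w) hred
    have hsort : l.Pairwise (fun a b => ¬ r b a) := progress r hr l hinv hnf
    have hword : wordOf l = w := by rw [Red.wordOf_eq r hred, wordOf_letters]
    refine ⟨⟨l, hsort, hbasic, ?_⟩, ?_⟩
    · rw [sum_weights_eq_length, hword, hw]
    · simp only [Subtype.mk_eq_mk]; exact hword

lemma card_SL (n : ℕ) : Nat.card (SL r n) = m ^ n := by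
  rw [Nat.card_congr (Equiv.ofBijective _ (phi_bijective r hr hwt n))]
  have : Nat.card (List.Vector (Fin m) n) = m ^ n := by
    rw [Nat.card_eq_fintype_card, card_vector, Fintype.card_fin]
  exact this

omit hwt in
lemma exists_sorted_rep (A : Multiset T) :
    ∃ l : List T, l.Pairwise (fun a b => ¬ r b a) ∧ (l : Multiset T) = A := by
  haveI : DecidableRel (fun a b : FormalComm (Fin m) => ¬ r b a) :=
    fun a b => Classical.dec _
  haveI : IsTotal (FormalComm (Fin m)) (fun a b => ¬ r b a) :=
    ⟨fun a b => by
      rcases ltri r hr a b with h' | h' | h'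
      · exact Or.inl (asymm' r hr h')
      · exact Or.inl (h' ▸ lirr r hr a)
      · exact Or.inr (asymm' r hr h')⟩
  haveI : IsTrans (FormalComm (Fin m)) (fun a b => ¬ r b a) :=
    ⟨fun a b c hab hbc => le_trans' r hr hab hbc⟩
  induction A using Multiset.induction_on with
  | empty => exact ⟨[], List.Pairwise.nil, rfl⟩
  | cons t A ih =>
      obtain ⟨l, hs, hl⟩ := ih
      refine ⟨(l.orderedInsert (fun a b => ¬ r b a) t), hs.orderedInsert t l, ?_⟩
      calc (↑(l.orderedInsert (fun a b => ¬ r b a) t) : Multiset T) = ↑(t :: l) :=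
            Multiset.coe_eq_coe.mpr (l.perm_orderedInsert _ t)
        _ = t ::ₘ ↑l := rfl
        _ = t ::ₘ A := by rw [hl]

lemma psi_bijective (n : ℕ) :
    Function.Bijective (fun l : SL r n => (⟨(l.1 : Multiset T), by
      obtain ⟨l, hs, hb, hw⟩ := l
      exact ⟨fun t ht => hb t ht, by simpa using hw⟩⟩ : MS r n)) := by
  constructor
  · rintro ⟨l₁, hs₁, hb₁, hw₁⟩ ⟨l₂, hs₂, hb₂, hw₂⟩ h
    simp only [Subtype.mk_eq_mk, Multiset.coe_eq_coe] at h ⊢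
    haveI : IsAntisymm (FormalComm (Fin m)) (fun a b => ¬ r b a) :=
      ⟨fun a b hab hba => by
        rcases ltri r hr a b with h' | h' | h'
        · exact absurd h' hba
        · exact h'
        · exact absurd h' hab⟩
    exact Subtype.ext <| List.Perm.eq_of_pairwise' hs₁ hs₂ h
  · rintro ⟨A, hA, hw⟩
    obtain ⟨l, hs, hl⟩ := exists_sorted_rep r hr A
    refine ⟨⟨l, hs, ?_, ?_⟩, ?_⟩
    · intro t ht; exact hA t (by rw [← hl]; exact ht)
    · rw [← hw, ← hl]; simp
    · simp only [Subtype.mk_eq_mk]; exact Subtype.ext hl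

lemma card_MS (n : ℕ) : Nat.card (MS r n) = m ^ n := by
  rw [← Nat.card_congr (Equiv.ofBijective _ (psi_bijective r hr hwt n))]
  exact card_SL r hr hwt n

lemma finite_MS (n : ℕ) : (MS r n).Finite := by
  rw [← Set.finite_coe_iff]
  haveI : Finite {w : List (Fin m) // w.length = n} := by
    have : Finite (List.Vector (Fin m) n) := inferInstance
    exact this
  haveI : Finite (SL r n) := Finite.of_injective _ (phi_bijective r hr hwt n).1
  exact Finite.of_surjective _ (psi_bijective r hr hwt n).2

/-- Basic commutators of weight `d`. -/
def HS (d : ℕ) : Set T := {t | IsBasic r t ∧ weight t = d}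

lemma finite_HS (d : ℕ) : (HS r d).Finite := by
  rw [← Set.finite_coe_iff]
  haveI : Finite (MS r d) := Set.finite_coe_iff.mpr (finite_MS r hr hwt d)
  apply Finite.of_injective (fun t : HS r d => (⟨({t.1} : Multiset T), by
    refine ⟨fun u hu => ?_, ?_⟩
    · rw [Multiset.mem_singleton.mp hu]; exact t.2.1
    · simpa using t.2.2⟩ : MS r d))
  rintro ⟨t₁, ht₁⟩ ⟨t₂, ht₂⟩ h
  simpa [Subtype.ext_iff] using h

end Bijection


noncomputable instance : DecidableEq (FormalComm (Fin m)) := Classical.decEq _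

lemma multiset_card_le_sum (M : Multiset ℕ) (h : ∀ x ∈ M, 1 ≤ x) : Multiset.card M ≤ M.sum := by
  induction M using Multiset.induction_on with
  | empty => simp
  | cons a M ih =>
      simp only [Multiset.card_cons, Multiset.sum_cons]
      have h1 := h a (by simp)
      have h2 := ih (fun x hx => h x (by simp [hx]))
      omega

lemma sum_ite_le (c w n : ℕ) (hc : c ≤ n) :
    ∑ k ∈ Finset.Icc 1 n, (if k ≤ c then w else 0) = c * w := by
  rw [← Finset.sum_filter]
  have : (Finset.Icc 1 n).filter (fun k => k ≤ c) = Finset.Icc 1 c := by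
    ext k; simp only [Finset.mem_filter, Finset.mem_Icc]; omega
  rw [this, Finset.sum_const, Nat.card_Icc]
  simp [Nat.smul_one_eq_cast]

section Counting
include hr hwt

/-- The finset of multisets of basic commutators of total weight `n`. -/
noncomputable def MSF (n : ℕ) : Finset (Multiset T) := (finite_MS r hr hwt n).toFinset

/-- The finset of basic commutators of weight `d`. -/
noncomputable def HF (d : ℕ) : Finset T := (finite_HS r hr hwt d).toFinset

lemma mem_MSF {n : ℕ} {A : Multiset T} :
    A ∈ MSF r hr hwt n ↔ (∀ t ∈ A, IsBasic r t) ∧ (A.map weight).sum = n :=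
  Set.Finite.mem_toFinset _

lemma mem_HF {d : ℕ} {t : T} :
    t ∈ HF r hr hwt d ↔ IsBasic r t ∧ weight t = d :=
  Set.Finite.mem_toFinset _

lemma card_MSF (n : ℕ) : (MSF r hr hwt n).card = m ^ n := by
  rw [← card_MS r hr hwt n, Nat.card_eq_card_finite_toFinset (finite_MS r hr hwt n)]
  rfl

lemma card_filter_count (n k : ℕ) (hk : 1 ≤ k) (t : T) (ht : IsBasic r t) :
    ((MSF r hr hwt n).filter (fun A => k ≤ A.count t)).card =
      if k * weight t ≤ n then (MSF r hr hwt (n - k * weight t)).card else 0 := by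
  classical
  split_ifs with hle
  · apply Finset.card_bij' (fun A _ => A - Multiset.replicate k t)
      (fun B _ => B + Multiset.replicate k t)
    · -- maps into target
      intro A hA
      rw [Finset.mem_filter, mem_MSF] at hA
      obtain ⟨⟨hbasic, hsum⟩, hcount⟩ := hA
      have hrep : Multiset.replicate k t ≤ A := Multiset.le_count_iff_replicate_le.mp hcount
      rw [mem_MSF]
      constructor
      · intro u hu
        exact hbasic u (Multiset.mem_of_le (Multiset.sub_le_self _ _) hu)
      · have hA' : A - Multiset.replicate k t + Multiset.replicate k t = A :=
          tsub_add_cancel_of_le hrep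
        have := congrArg (fun M => (Multiset.map weight M).sum) hA'
        simp only [Multiset.map_add, Multiset.sum_add, Multiset.map_replicate,
          Multiset.sum_replicate, smul_eq_mul] at this
        omega
    · intro B hB
      rw [mem_MSF] at hB
      obtain ⟨hbasic, hsum⟩ := hB
      rw [Finset.mem_filter, mem_MSF]
      refine ⟨⟨fun u hu => ?_, ?_⟩, ?_⟩
      · rcases Multiset.mem_add.mp hu with h | h
        · exact hbasic u h
        · rwa [Multiset.eq_of_mem_replicate h]
      · simp only [Multiset.map_add, Multiset.sum_add, Multiset.map_replicate,
          Multiset.sum_replicate, smul_eq_mul]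
        omega
      · rw [Multiset.count_add, Multiset.count_replicate_self]; omega
    · intro A hA
      rw [Finset.mem_filter, mem_MSF] at hA
      exact tsub_add_cancel_of_le (Multiset.le_count_iff_replicate_le.mp hA.2)
    · intro B hB
      exact add_tsub_cancel_right _ _
  · rw [Finset.card_eq_zero, Finset.filter_eq_empty_iff]
    intro A hA
    rw [mem_MSF] at hA
    intro hcount
    apply hle
    have hrep : Multiset.replicate k t ≤ A := Multiset.le_count_iff_replicate_le.mp hcount
    have hu : A - Multiset.replicate k t + Multiset.replicate k t = A := tsub_add_cancel_of_le hrep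
    have := congrArg (fun M => (Multiset.map weight M).sum) hu.symm
    simp only [Multiset.map_add, Multiset.sum_add, Multiset.map_replicate,
      Multiset.sum_replicate, smul_eq_mul] at this
    omega

lemma claim2 (n : ℕ) :
    n * (MSF r hr hwt n).card =
      ∑ e ∈ Finset.Icc 1 n, (∑ d ∈ e.divisors, d * (HF r hr hwt d).card) *
        (MSF r hr hwt (n - e)).card := by
  classical
  set U : Finset T := (Finset.Icc 1 n).biUnion (HF r hr hwt) with hU
  -- step 1: n * card = ∑_A ∑_{t ∈ U} count * weight
  have step1 : n * (MSF r hr hwt n).card =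
      ∑ A ∈ MSF r hr hwt n, ∑ t ∈ U, A.count t * weight t := by
    rw [mul_comm, ← Finset.sum_const_nat (m := n) (fun A hA => rfl)]
    apply Finset.sum_congr rfl
    intro A hA
    rw [mem_MSF] at hA
    obtain ⟨hbasic, hsum⟩ := hA
    have h1 : (A.map weight).sum = ∑ t ∈ A.toFinset, A.count t • weight t :=
      Finset.sum_multiset_map_count A weight
    have h2 : A.toFinset ⊆ U := by
      intro t ht
      rw [Multiset.mem_toFinset] at ht
      rw [hU, Finset.mem_biUnion]
      refine ⟨weight t, ?_, ?_⟩
      · rw [Finset.mem_Icc]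
        refine ⟨weight_pos t, ?_⟩
        rw [← hsum]
        exact Multiset.single_le_sum (fun x hx => Nat.zero_le x) _
          (Multiset.mem_map_of_mem weight ht)
      · rw [mem_HF]; exact ⟨hbasic t ht, rfl⟩
    calc n = (A.map weight).sum := hsum.symm
      _ = ∑ t ∈ A.toFinset, A.count t • weight t := h1
      _ = ∑ t ∈ U, A.count t * weight t := by
          rw [Finset.sum_subset h2]
          · simp [smul_eq_mul]
          · intro t _ ht
            rw [Multiset.mem_toFinset] at ht
            simp [Multiset.count_eq_zero_of_notMem ht]
  rw [step1, Finset.sum_comm]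
  -- step 2: layer cake inside
  have step2 : ∀ t ∈ U, ∑ A ∈ MSF r hr hwt n, A.count t * weight t =
      ∑ k ∈ Finset.Icc 1 n, (if k * weight t ≤ n then
        weight t * (MSF r hr hwt (n - k * weight t)).card else 0) := by
    intro t htU
    have htb : IsBasic r t := by
      rw [hU, Finset.mem_biUnion] at htU
      obtain ⟨d, _, hd⟩ := htU
      exact (mem_HF r hr hwt |>.mp hd).1
    have inner : ∀ A ∈ MSF r hr hwt n, A.count t * weight t =
        ∑ k ∈ Finset.Icc 1 n, (if k ≤ A.count t then weight t else 0) := by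
      intro A hA
      rw [mem_MSF] at hA
      obtain ⟨hbasic, hsum⟩ := hA
      have hcard : A.count t ≤ n := by
        calc A.count t ≤ Multiset.card A := Multiset.count_le_card t A
          _ = Multiset.card (A.map weight) := (Multiset.card_map _ _).symm
          _ ≤ (A.map weight).sum := multiset_card_le_sum _ (by
              intro x hx
              obtain ⟨u, hu, rfl⟩ := Multiset.mem_map.mp hx
              exact weight_pos u)
          _ = n := hsum
      rw [sum_ite_le _ _ _ hcard]
    rw [Finset.sum_congr rfl inner, Finset.sum_comm]
    apply Finset.sum_congr rfl
    intro k hk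
    rw [Finset.mem_Icc] at hk
    have : ∑ A ∈ MSF r hr hwt n, (if k ≤ A.count t then weight t else 0) =
        ((MSF r hr hwt n).filter (fun A => k ≤ A.count t)).card * weight t := by
      rw [← Finset.sum_filter, Finset.sum_const, smul_eq_mul]
    rw [this, card_filter_count r hr hwt n k hk.1 t htb]
    split_ifs with h
    · ring
    · simp
  rw [Finset.sum_congr rfl step2]
  -- step 3: group by weight
  have step3 : ∑ t ∈ U, ∑ k ∈ Finset.Icc 1 n, (if k * weight t ≤ n then
      weight t * (MSF r hr hwt (n - k * weight t)).card else 0) =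
      ∑ d ∈ Finset.Icc 1 n, (HF r hr hwt d).card *
        ∑ k ∈ Finset.Icc 1 n, (if k * d ≤ n then
          d * (MSF r hr hwt (n - k * d)).card else 0) := by
    rw [hU, Finset.sum_biUnion]
    · apply Finset.sum_congr rfl
      intro d hd
      have hcongr : ∀ t ∈ HF r hr hwt d,
          (∑ k ∈ Finset.Icc 1 n, if k * weight t ≤ n then
            weight t * (MSF r hr hwt (n - k * weight t)).card else 0) =
          ∑ k ∈ Finset.Icc 1 n, (if k * d ≤ n then
            d * (MSF r hr hwt (n - k * d)).card else 0) := by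
        intro t ht
        rw [(mem_HF r hr hwt).mp ht |>.2]
      rw [Finset.sum_congr rfl hcongr, Finset.sum_const, smul_eq_mul]
    · intro d₁ h₁ d₂ h₂ hne
      apply Finset.disjoint_left.mpr
      intro t ht₁ ht₂
      rw [mem_HF] at ht₁ ht₂
      exact hne (by rw [← ht₁.2, ht₂.2])
  rw [step3]
  -- step 4: reindex over divisors
  have lhs_eq : ∑ d ∈ Finset.Icc 1 n, (HF r hr hwt d).card *
      ∑ k ∈ Finset.Icc 1 n, (if k * d ≤ n then
        d * (MSF r hr hwt (n - k * d)).card else 0) =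
      ∑ p ∈ ((Finset.Icc 1 n) ×ˢ (Finset.Icc 1 n)).filter (fun p => p.1 * p.2 ≤ n),
        p.1 * (HF r hr hwt p.1).card * (MSF r hr hwt (n - p.1 * p.2)).card := by
    rw [Finset.sum_filter, Finset.sum_product]
    apply Finset.sum_congr rfl
    intro d hd
    rw [Finset.mul_sum]
    apply Finset.sum_congr rfl
    intro k hk
    rw [mul_comm d k]
    split_ifs with h1
    · ring
    · simp
  have rhs_eq : ∑ e ∈ Finset.Icc 1 n, (∑ d ∈ e.divisors, d * (HF r hr hwt d).card) *
      (MSF r hr hwt (n - e)).card =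
      ∑ q ∈ (Finset.Icc 1 n).sigma (fun e => e.divisors),
        q.2 * (HF r hr hwt q.2).card * (MSF r hr hwt (n - q.1)).card := by
    rw [Finset.sum_sigma]
    apply Finset.sum_congr rfl
    intro e he
    rw [Finset.sum_mul]
  rw [lhs_eq, rhs_eq]
  apply Finset.sum_nbij' (fun p => (⟨p.1 * p.2, p.1⟩ : Σ _ : ℕ, ℕ))
    (fun q => (q.2, q.1 / q.2))
  · intro p hp
    rw [Finset.mem_filter, Finset.mem_product, Finset.mem_Icc, Finset.mem_Icc] at hp
    obtain ⟨⟨⟨h1d, h2d⟩, ⟨h1k, h2k⟩⟩, hle⟩ := hp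
    rw [Finset.mem_sigma, Finset.mem_Icc, Nat.mem_divisors]
    refine ⟨⟨?_, hle⟩, ⟨Dvd.intro _ rfl, ?_⟩⟩
    · exact Nat.one_le_iff_ne_zero.mpr (by positivity)
    · positivity
  · intro q hq
    rw [Finset.mem_sigma, Finset.mem_Icc, Nat.mem_divisors] at hq
    obtain ⟨⟨h1e, h2e⟩, hdvd, hne⟩ := hq
    have hdpos : 1 ≤ q.2 := Nat.pos_of_dvd_of_pos hdvd h1e
    have hdle : q.2 ≤ q.1 := Nat.le_of_dvd h1e hdvd
    rw [Finset.mem_filter, Finset.mem_product, Finset.mem_Icc, Finset.mem_Icc]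
    have hdivpos : 1 ≤ q.1 / q.2 := Nat.one_le_div_iff hdpos |>.mpr hdle
    have hdivle : q.1 / q.2 ≤ n := le_trans (Nat.div_le_self _ _) h2e
    refine ⟨⟨⟨hdpos, le_trans hdle h2e⟩, ⟨hdivpos, hdivle⟩⟩, ?_⟩
    rw [Nat.mul_div_cancel' hdvd]; exact h2e
  · intro p hp
    rw [Finset.mem_filter, Finset.mem_product, Finset.mem_Icc] at hp
    have : 1 ≤ p.1 := hp.1.1.1
    simp [Nat.mul_div_cancel_left _ this]
  · intro q hq
    rw [Finset.mem_sigma, Nat.mem_divisors] at hq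
    have := Nat.mul_div_cancel' hq.2.1
    simp [this]
  · intro p hp
    rfl

end Counting


section Witt
include hr hwt

lemma c_eq (n : ℕ) (hn : 1 ≤ n) :
    ∑ d ∈ n.divisors, d * (HF r hr hwt d).card = m ^ n := by
  induction n using Nat.strong_induction_on with
  | _ n ih =>
    have h2 := claim2 r hr hwt n
    simp only [card_MSF r hr hwt] at h2
    have hsplit : Finset.Icc 1 n = insert n (Finset.Icc 1 (n - 1)) := by
      ext x; simp only [Finset.mem_Icc, Finset.mem_insert]; omega
    rw [hsplit, Finset.sum_insert (by simp only [Finset.mem_Icc]; omega)] at h2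
    have hIH : ∀ e ∈ Finset.Icc 1 (n - 1),
        (∑ d ∈ e.divisors, d * (HF r hr hwt d).card) * m ^ (n - e) = m ^ n := by
      intro e he; rw [Finset.mem_Icc] at he
      rw [ih e (by omega) he.1, ← pow_add]
      congr 1; omega
    rw [Finset.sum_congr rfl hIH, Finset.sum_const, Nat.card_Icc, smul_eq_mul] at h2
    have hnn : n - n = 0 := by omega
    rw [hnn, pow_zero, mul_one] at h2
    have hc : n - 1 + 1 - 1 = n - 1 := by omega
    rw [hc] at h2
    generalize hq : m ^ n = q at h2 ⊢
    obtain ⟨p, rfl⟩ : ∃ p, n = p + 1 := ⟨n - 1, by omega⟩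
    simp only [Nat.add_sub_cancel] at h2
    have hline : (p + 1) * q = p * q + q := by ring
    omega

lemma card_HF_eq_witt (d : ℕ) (hd : 1 ≤ d) : (HF r hr hwt d).card = witt d m := by
  have key : ∀ n, 0 < n →
      ∑ i ∈ n.divisors, (fun i : ℕ => ((i * (HF r hr hwt i).card : ℕ) : ℤ)) i =
        (fun n : ℕ => (m : ℤ) ^ n) n := by
    intro n hn
    simp only [← Nat.cast_sum]
    exact_mod_cast congrArg (Nat.cast : ℕ → ℤ) (c_eq r hr hwt n hn)
  have inv := (ArithmeticFunction.sum_eq_iff_sum_smul_moebius_eq (R := ℤ)).mp key d hd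
  rw [Nat.sum_divisorsAntidiagonal
    (f := fun i j => (ArithmeticFunction.moebius i : ℤ) • (m : ℤ) ^ j)] at inv
  simp only [zsmul_eq_mul] at inv
  unfold witt
  rw [show (∑ x ∈ d.divisors, ArithmeticFunction.moebius x * (m : ℤ) ^ (d / x)) =
      ((d * (HF r hr hwt d).card : ℕ) : ℤ) by exact_mod_cast inv]
  push_cast
  rw [Int.mul_ediv_cancel_left _ (by exact_mod_cast Nat.one_le_iff_ne_zero.mp hd)]
  simp

end Witt

lemma witt_two (q k : ℕ) (h : 2 * k = q * (q - 1)) : witt 2 q = k := by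
  have hdiv : (2 : ℕ).divisors = {1, 2} := by decide
  unfold witt
  rw [hdiv]
  rw [Finset.sum_insert (by decide), Finset.sum_singleton]
  rw [ArithmeticFunction.moebius_apply_one,
    ArithmeticFunction.moebius_apply_prime Nat.prime_two]
  have hsum : (1 : ℤ) * (q : ℤ) ^ (2 / 1) + (-1) * (q : ℤ) ^ (2 / 2) = 2 * (k : ℤ) := by
    rcases Nat.eq_zero_or_pos q with hq | hq
    · subst hq; simp at h ⊢; omega
    · have hq1 : ((q - 1 : ℕ) : ℤ) = (q : ℤ) - 1 := by omega
      have hcast : (2 : ℤ) * k = (q : ℤ) * ((q : ℤ) - 1) := by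
        rw [← hq1]; exact_mod_cast congrArg (Nat.cast : ℕ → ℤ) h
      norm_num
      rw [hcast]; ring
  rw [hsum]
  have h2 : ((2 : ℕ) : ℤ) = 2 := by norm_num
  rw [h2, Int.mul_ediv_cancel_left _ (by norm_num : (2 : ℤ) ≠ 0)]
  simp

section Pairs
include hr

open scoped Classical in
lemma two_mul_card_filter_lt (S : Finset (FormalComm (Fin m))) :
    2 * ((S ×ˢ S).filter
      (fun p : (FormalComm (Fin m)) × (FormalComm (Fin m)) => r p.2 p.1)).card =
      S.card * (S.card - 1) := by
  classical
  set F := (S ×ˢ S).filter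
    (fun p : (FormalComm (Fin m)) × (FormalComm (Fin m)) => r p.2 p.1) with hF
  set G := (S ×ˢ S).filter
    (fun p : (FormalComm (Fin m)) × (FormalComm (Fin m)) => r p.1 p.2) with hG
  set D := (S ×ˢ S).filter
    (fun p : (FormalComm (Fin m)) × (FormalComm (Fin m)) => p.1 = p.2) with hD
  have hFG : F.card = G.card := by
    apply Finset.card_bij (fun (p : T × T) _ => p.swap)
    · intro p hp
      rw [hF, Finset.mem_filter, Finset.mem_product] at hp
      rw [hG, Finset.mem_filter, Finset.mem_product]
      exact ⟨⟨hp.1.2, hp.1.1⟩, hp.2⟩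
    · intro p hp q hq hpq
      exact Prod.swap_injective hpq
    · intro p hp
      rw [hG, Finset.mem_filter, Finset.mem_product] at hp
      refine ⟨p.swap, ?_, by simp⟩
      rw [hF, Finset.mem_filter, Finset.mem_product]
      exact ⟨⟨hp.1.2, hp.1.1⟩, hp.2⟩
  have hDcard : D.card = S.card := by
    apply Finset.card_bij (fun (p : T × T) _ => p.1)
    · intro p hp
      rw [hD, Finset.mem_filter, Finset.mem_product] at hp
      exact hp.1.1
    · intro p hp q hq hpq
      rw [hD, Finset.mem_filter] at hp hq
      ext
      · exact hpq
      · rw [← hp.2, ← hq.2]; exact hpq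
    · intro a ha
      refine ⟨(a, a), ?_, rfl⟩
      rw [hD, Finset.mem_filter, Finset.mem_product]
      exact ⟨⟨ha, ha⟩, rfl⟩
  have hpart : F.card + (G.card + D.card) = S.card * S.card := by
    rw [← Finset.card_product S S]
    rw [← Finset.card_filter_add_card_filter_not (s := S ×ˢ S)
      (p := fun p : (FormalComm (Fin m)) × (FormalComm (Fin m)) => r p.2 p.1)]
    congr 1
    have hsplit : (S ×ˢ S).filter
        (fun p : (FormalComm (Fin m)) × (FormalComm (Fin m)) => ¬ r p.2 p.1) = G ∪ D := by
      ext p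
      rw [hG, hD, Finset.mem_union, Finset.mem_filter, Finset.mem_filter, Finset.mem_filter]
      constructor
      · rintro ⟨hp, hnp⟩
        rcases ltri r hr p.1 p.2 with h | h | h
        · exact Or.inl ⟨hp, h⟩
        · exact Or.inr ⟨hp, h⟩
        · exact absurd h hnp
      · rintro (⟨hp, h⟩ | ⟨hp, h⟩)
        · exact ⟨hp, asymm' r hr h⟩
        · exact ⟨hp, h ▸ lirr r hr p.1⟩
    rw [hsplit, Finset.card_union_of_disjoint]
    rw [Finset.disjoint_left]
    intro p hp hq
    rw [hG, Finset.mem_filter] at hp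
    rw [hD, Finset.mem_filter] at hq
    exact lirr r hr p.1 (hq.2 ▸ hp.2)
  have hcc : S.card * S.card = S.card * (S.card - 1) + S.card := by
    rcases Nat.eq_zero_or_pos S.card with h | h
    · simp [h]
    · have h1 : S.card - 1 + 1 = S.card := by omega
      calc S.card * S.card = S.card * ((S.card - 1) + 1) := by rw [h1]
        _ = S.card * (S.card - 1) + S.card := by ring
  omega

end Pairs


section Final
include hr hwt

lemma mem_biUnion_HF {s : Finset ℕ} {t : T} :
    t ∈ s.biUnion (HF r hr hwt) ↔ IsBasic r t ∧ weight t ∈ s := by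
  constructor
  · intro h
    obtain ⟨d, hd, ht⟩ := Finset.mem_biUnion.mp h
    obtain ⟨hb, hw⟩ := (mem_HF r hr hwt).mp ht
    exact ⟨hb, hw ▸ hd⟩
  · intro h
    exact Finset.mem_biUnion.mpr ⟨weight t, h.2, (mem_HF r hr hwt).mpr ⟨h.1, rfl⟩⟩

lemma card_biUnion_HF (s : Finset ℕ) :
    (s.biUnion (HF r hr hwt)).card = ∑ i ∈ s, (HF r hr hwt i).card := by
  apply Finset.card_biUnion
  intro d₁ _ d₂ _ hne
  rw [Function.onFun, Finset.disjoint_left]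
  intro t h1 h2
  rw [mem_HF] at h1 h2
  exact hne (by rw [← h1.2, h2.2])

lemma card_biUnion_HF_witt (a b : ℕ) (ha : 1 ≤ a) :
    ((Finset.Icc a b).biUnion (HF r hr hwt)).card = ∑ i ∈ Finset.Icc a b, witt i m := by
  rw [card_biUnion_HF]
  exact Finset.sum_congr rfl (fun i hi =>
    card_HF_eq_witt r hr hwt i (le_trans ha (Finset.mem_Icc.mp hi).1))

end Final

end HallWitt


/-- Corollary 2.5: if `c₁ ≥ c₂` and `c₂ + n < c₁ + 1`, then
`|A \ C| = (∑_{i=c₁+1}^{c₁+n} χ_i(m))(∑_{i=c₂+1}^{c₂+n} χ_i(m))`; and if `c₂ + n ≥ c₁ + 1`,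
then `|A \ C| = (∑_{i=c₁+1}^{c₁+n} χ_i(m))(∑_{i=c₂+1}^{c₁} χ_i(m)) + χ₂(∑_{i=c₁+1}^{c₂+n} χ_i(m))`. -/
theorem card_A_diff_C (m c₁ c₂ n : ℕ)
    (r : FormalComm (Fin m) → FormalComm (Fin m) → Prop)
    (hr : IsStrictTotalOrder (FormalComm (Fin m)) r)
    (hwt : ∀ a b : FormalComm (Fin m), a.weight < b.weight → r a b)
    (hc : c₂ ≤ c₁) (hc₂ : 1 ≤ c₂) (hn : 1 ≤ n)
    (hineq : n + c₁ ≤ 2 * c₂ + 1) :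
    let A : Set (FormalComm (Fin m)) := {p | ∃ β α : FormalComm (Fin m),
      p = .comm β α ∧ FormalComm.IsBasic r β ∧ FormalComm.IsBasic r α ∧ r α β ∧
      c₁ + 1 ≤ β.weight ∧ β.weight ≤ c₁ + n ∧ c₂ + 1 ≤ α.weight ∧ α.weight ≤ c₂ + n}
    let C : Set (FormalComm (Fin m)) := {p | ∃ β α : FormalComm (Fin m),
      p = .comm β α ∧ FormalComm.IsBasic r β ∧ FormalComm.IsBasic r α ∧ r α β ∧
      c₂ + n + 1 ≤ β.weight ∧ c₁ + 1 ≤ α.weight ∧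
      β.weight + α.weight ≤ 2 * n + c₁ + c₂ + 1}
    (c₂ + n < c₁ + 1 →
      (A \ C).ncard = (∑ i ∈ Finset.Icc (c₁ + 1) (c₁ + n), witt i m) *
        (∑ i ∈ Finset.Icc (c₂ + 1) (c₂ + n), witt i m)) ∧
    (c₁ + 1 ≤ c₂ + n →
      (A \ C).ncard = (∑ i ∈ Finset.Icc (c₁ + 1) (c₁ + n), witt i m) *
          (∑ i ∈ Finset.Icc (c₂ + 1) c₁, witt i m) +
        witt 2 (∑ i ∈ Finset.Icc (c₁ + 1) (c₂ + n), witt i m)) := by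
  classical
  intro A C
  have hinj : Function.Injective
      (fun p : FormalComm (Fin m) × FormalComm (Fin m) => FormalComm.comm p.1 p.2) := by
    rintro ⟨a, b⟩ ⟨c, d⟩ h
    simp only [FormalComm.comm.injEq] at h
    exact Prod.ext h.1 h.2
  constructor
  · -- Case 1 : c₂ + n < c₁ + 1
    intro h1
    set Hβ := (Finset.Icc (c₁ + 1) (c₁ + n)).biUnion (HallWitt.HF r hr hwt) with hHβ
    set Hα := (Finset.Icc (c₂ + 1) (c₂ + n)).biUnion (HallWitt.HF r hr hwt) with hHα
    have hset : A \ C =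
        ↑((Hβ ×ˢ Hα).image
          (fun p : FormalComm (Fin m) × FormalComm (Fin m) => FormalComm.comm p.1 p.2)) := by
      ext x
      simp only [Set.mem_diff, Finset.coe_image, Set.mem_image, Finset.mem_coe,
        Finset.mem_product, A, C, Set.mem_setOf_eq]
      constructor
      · rintro ⟨⟨β, α, rfl, hβ, hα, hαβ, hβ1, hβ2, hα1, hα2⟩, hnc⟩
        refine ⟨(β, α), ⟨?_, ?_⟩, rfl⟩
        · exact (HallWitt.mem_biUnion_HF r hr hwt).mpr ⟨hβ, Finset.mem_Icc.mpr ⟨hβ1, hβ2⟩⟩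
        · exact (HallWitt.mem_biUnion_HF r hr hwt).mpr ⟨hα, Finset.mem_Icc.mpr ⟨hα1, hα2⟩⟩
      · rintro ⟨⟨β, α⟩, ⟨hβm, hαm⟩, rfl⟩
        obtain ⟨hβb, hβw⟩ := (HallWitt.mem_biUnion_HF r hr hwt).mp hβm
        obtain ⟨hαb, hαw⟩ := (HallWitt.mem_biUnion_HF r hr hwt).mp hαm
        rw [Finset.mem_Icc] at hβw hαw
        dsimp only at hβw hαw
        have hαβ : r α β := hwt α β (by omega)
        refine ⟨⟨β, α, rfl, hβb, hαb, hαβ, hβw.1, hβw.2, hαw.1, hαw.2⟩, ?_⟩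
        rintro ⟨β', α', heq, -, -, -, -, hα'1, -⟩
        simp only [FormalComm.comm.injEq] at heq
        obtain ⟨rfl, rfl⟩ := heq
        omega
    rw [hset, Set.ncard_coe_finset, Finset.card_image_of_injective _ hinj,
      Finset.card_product, hHβ, hHα,
      HallWitt.card_biUnion_HF_witt r hr hwt _ _ (by omega),
      HallWitt.card_biUnion_HF_witt r hr hwt _ _ (by omega)]
  · -- Case 2 : c₁ + 1 ≤ c₂ + n
    intro h2
    set Hβ := (Finset.Icc (c₁ + 1) (c₁ + n)).biUnion (HallWitt.HF r hr hwt) with hHβ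
    set Hlow := (Finset.Icc (c₂ + 1) c₁).biUnion (HallWitt.HF r hr hwt) with hHlow
    set Hmid := (Finset.Icc (c₁ + 1) (c₂ + n)).biUnion (HallWitt.HF r hr hwt) with hHmid
    set E₁ := Hβ ×ˢ Hlow with hE₁
    set E₂ := (Hmid ×ˢ Hmid).filter
      (fun p : FormalComm (Fin m) × FormalComm (Fin m) => r p.2 p.1) with hE₂
    have hset : A \ C =
        ↑((E₁ ∪ E₂).image
          (fun p : FormalComm (Fin m) × FormalComm (Fin m) => FormalComm.comm p.1 p.2)) := by
      ext x
      simp only [Set.mem_diff, Finset.coe_image, Set.mem_image, Finset.mem_coe,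
        Finset.mem_union, Finset.mem_filter, Finset.mem_product, A, C, Set.mem_setOf_eq,
        hE₁, hE₂]
      constructor
      · rintro ⟨⟨β, α, rfl, hβ, hα, hαβ, hβ1, hβ2, hα1, hα2⟩, hnc⟩
        refine ⟨(β, α), ?_, rfl⟩
        dsimp only
        by_cases hcase : α.weight ≤ c₁
        · left
          constructor
          · exact (HallWitt.mem_biUnion_HF r hr hwt).mpr ⟨hβ, Finset.mem_Icc.mpr ⟨hβ1, hβ2⟩⟩
          · exact (HallWitt.mem_biUnion_HF r hr hwt).mpr ⟨hα, Finset.mem_Icc.mpr ⟨hα1, hcase⟩⟩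
        · right
          have hβle : β.weight ≤ c₂ + n := by
            by_contra hgt
            exact hnc ⟨β, α, rfl, hβ, hα, hαβ, by omega, by omega, by omega⟩
          refine ⟨⟨?_, ?_⟩, hαβ⟩
          · exact (HallWitt.mem_biUnion_HF r hr hwt).mpr ⟨hβ, Finset.mem_Icc.mpr ⟨hβ1, hβle⟩⟩
          · exact (HallWitt.mem_biUnion_HF r hr hwt).mpr
              ⟨hα, Finset.mem_Icc.mpr ⟨by omega, hα2⟩⟩
      · rintro ⟨⟨β, α⟩, hmem | ⟨⟨hβm, hαm⟩, hαβ⟩, rfl⟩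
        · obtain ⟨hβm, hαm⟩ := hmem
          obtain ⟨hβb, hβw⟩ := (HallWitt.mem_biUnion_HF r hr hwt).mp hβm
          obtain ⟨hαb, hαw⟩ := (HallWitt.mem_biUnion_HF r hr hwt).mp hαm
          rw [Finset.mem_Icc] at hβw hαw
          dsimp only at hβw hαw
          have hαβ : r α β := hwt α β (by omega)
          refine ⟨⟨β, α, rfl, hβb, hαb, hαβ, hβw.1, hβw.2, hαw.1, by omega⟩, ?_⟩
          rintro ⟨β', α', heq, -, -, -, -, hα'1, -⟩
          simp only [FormalComm.comm.injEq] at heq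
          obtain ⟨rfl, rfl⟩ := heq
          omega
        · obtain ⟨hβb, hβw⟩ := (HallWitt.mem_biUnion_HF r hr hwt).mp hβm
          obtain ⟨hαb, hαw⟩ := (HallWitt.mem_biUnion_HF r hr hwt).mp hαm
          rw [Finset.mem_Icc] at hβw hαw
          dsimp only at hβw hαw hαβ
          refine ⟨⟨β, α, rfl, hβb, hαb, hαβ, hβw.1, by omega, by omega, hαw.2⟩, ?_⟩
          rintro ⟨β', α', heq, -, -, -, hβ'1, -, -⟩
          simp only [FormalComm.comm.injEq] at heq
          obtain ⟨rfl, rfl⟩ := heq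
          omega
    rw [hset, Set.ncard_coe_finset, Finset.card_image_of_injective _ hinj]
    have hdisj : Disjoint E₁ E₂ := by
      rw [Finset.disjoint_left]
      rintro ⟨β, α⟩ hm1 hm2
      rw [hE₁, Finset.mem_product] at hm1
      rw [hE₂, Finset.mem_filter, Finset.mem_product] at hm2
      obtain ⟨-, hαm1⟩ := hm1
      obtain ⟨⟨-, hαm2⟩, -⟩ := hm2
      have h1 := (HallWitt.mem_biUnion_HF r hr hwt).mp hαm1
      have h2 := (HallWitt.mem_biUnion_HF r hr hwt).mp hαm2
      rw [Finset.mem_Icc] at h1 h2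
      omega
    rw [Finset.card_union_of_disjoint hdisj, hE₁, Finset.card_product]
    have hb : Hβ.card = ∑ i ∈ Finset.Icc (c₁ + 1) (c₁ + n), witt i m :=
      HallWitt.card_biUnion_HF_witt r hr hwt _ _ (by omega)
    have hlow : Hlow.card = ∑ i ∈ Finset.Icc (c₂ + 1) c₁, witt i m :=
      HallWitt.card_biUnion_HF_witt r hr hwt _ _ (by omega)
    have hmid : Hmid.card = ∑ i ∈ Finset.Icc (c₁ + 1) (c₂ + n), witt i m :=
      HallWitt.card_biUnion_HF_witt r hr hwt _ _ (by omega)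
    rw [hb, hlow, ← hmid]
    congr 1
    refine (HallWitt.witt_two Hmid.card E₂.card ?_).symm
    exact HallWitt.two_mul_card_filter_lt r hr Hmid
end
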